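/- arXiv:2402.10934 — 4 statements merged into one kernel-verified Lean document; each statement's English description precedes it below -/
import Mathlib

section
/- Let p be a nonzero real number, n an integer, and r a positive real number, and suppose (2n+1)·π/p lies in the interval (−π, π]. Then, using principal-branch complex powers (cpow), ((r : ℂ))^p + (r · exp((2n+1)·π·I/p))^p = 0; that is, r·exp((2n+1)πI/p) is a Hölder–Minkowski inverse of r for the operation x₀, x₁ ↦ (x₀^p + x₁^p)^(1/p). -/
open Complex

/-- Hölder–Minkowski inverse: for nonzero real `p`, an integer `n`, and positive real `r`,
if `(2n+1)π/p ∈ (-π, π]` then, with principal-branch complex powers,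
`r^p + (r·exp((2n+1)πI/p))^p = 0`. -/
theorem holder_minkowski_inverse
    (p : ℝ) (n : ℤ) (r : ℝ) (hp : p ≠ 0) (hr : 0 < r)
    (hθ : (2 * (n : ℝ) + 1) * Real.pi / p ∈ Set.Ioc (-Real.pi) Real.pi) :
    ((r : ℂ)) ^ (p : ℂ) +
      ((r : ℂ) * Complex.exp ((2 * (n : ℂ) + 1) * (Real.pi : ℂ) * Complex.I / (p : ℂ)))
        ^ (p : ℂ) = 0 := by
  obtain ⟨h1, h2⟩ := hθ
  set θ : ℝ := (2 * (n : ℝ) + 1) * Real.pi / p with hθdef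
  have hexpo : (2 * (n : ℂ) + 1) * (Real.pi : ℂ) * Complex.I / (p : ℂ)
      = (θ : ℂ) * Complex.I := by
    rw [hθdef]; push_cast; ring
  rw [hexpo]
  have hz : (r : ℂ) * Complex.exp ((θ:ℂ) * I)
      = Complex.exp ((Real.log r : ℂ) + (θ:ℂ) * I) := by
    rw [Complex.exp_add]
    congr 1
    rw [← Complex.ofReal_exp, Real.exp_log hr]
  have hlog : Complex.log ((r : ℂ) * Complex.exp ((θ:ℂ) * I))
      = (Real.log r : ℂ) + (θ:ℂ) * I := by
    rw [hz, Complex.log_exp] <;> simp [h1, h2]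
  have hne : (r : ℂ) * Complex.exp ((θ:ℂ) * I) ≠ 0 :=
    mul_ne_zero (by exact_mod_cast hr.ne') (Complex.exp_ne_zero _)
  have hr0 : (r : ℂ) ≠ 0 := by exact_mod_cast hr.ne'
  rw [Complex.cpow_def_of_ne_zero hne, hlog, Complex.cpow_def_of_ne_zero hr0,
    ← Complex.ofReal_log hr.le]
  have hpθ : ((Real.log r : ℂ) + (θ:ℂ) * I) * (p : ℂ)
      = (Real.log r:ℂ) * (p:ℂ) + ((n:ℂ) * (2 * Real.pi * I) + Real.pi * I) := by
    have hc : (p:ℂ) ≠ 0 := by exact_mod_cast hp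
    have : (p:ℂ) * (θ:ℂ) = (2*(n:ℂ)+1) * Real.pi := by
      rw [hθdef]; push_cast
      field_simp
    calc ((Real.log r : ℂ) + (θ:ℂ) * I) * (p : ℂ)
        = (Real.log r:ℂ) * (p:ℂ) + ((p:ℂ) * (θ:ℂ)) * I := by ring
      _ = _ := by rw [this]; ring
  rw [hpθ, Complex.exp_add, Complex.exp_add, Complex.exp_int_mul_two_pi_mul_I,
    Complex.exp_pi_mul_I]
  ring
end

section
/- Let x₀, x₁, a₀, a₁ be positive real numbers. Then, as the nonzero real parameter p tends to 0, the projected Hölder–Minkowski average ((a₀^p · x₀^p + a₁^p · x₁^p)/(a₀^p + a₁^p))^(1/p) tends to x₀^(1/2) · x₁^(1/2) = √(x₀·x₁), where all powers are real powers (rpow) and the limit is taken along p → 0 with p ≠ 0. -/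
open Filter

/-- As the nonzero real parameter `p` tends to `0`, the projected Hölder–Minkowski
average tends to the unweighted geometric mean `x₀^(1/2) · x₁^(1/2)`, regardless of the
positive weights `a₀, a₁`. -/
theorem holder_minkowski_tendsto_geometric_mean
    (x₀ x₁ a₀ a₁ : ℝ) (hx₀ : 0 < x₀) (hx₁ : 0 < x₁) (ha₀ : 0 < a₀) (ha₁ : 0 < a₁) :
    Tendsto
      (fun p : ℝ => ((a₀ ^ p * x₀ ^ p + a₁ ^ p * x₁ ^ p) / (a₀ ^ p + a₁ ^ p)) ^ (1 / p))
      (nhdsWithin 0 {0}ᶜ)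
      (nhds (x₀ ^ ((1 : ℝ) / 2) * x₁ ^ ((1 : ℝ) / 2))) := by
  set F : ℝ → ℝ := fun p => (a₀ ^ p * x₀ ^ p + a₁ ^ p * x₁ ^ p) / (a₀ ^ p + a₁ ^ p) with hF
  have hFpos : ∀ p : ℝ, 0 < F p := fun p => by
    apply div_pos
    · positivity
    · positivity
  -- derivative of log ∘ F at 0
  have hN : HasDerivAt (fun p : ℝ => a₀ ^ p * x₀ ^ p + a₁ ^ p * x₁ ^ p)
      ((Real.log a₀ + Real.log x₀) + (Real.log a₁ + Real.log x₁)) 0 := by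
    have h0 : HasDerivAt (fun p : ℝ => (a₀ * x₀) ^ p) (Real.log a₀ + Real.log x₀) 0 := by
      have := (Real.hasStrictDerivAt_const_rpow (mul_pos ha₀ hx₀) 0).hasDerivAt
      simpa [Real.log_mul ha₀.ne' hx₀.ne'] using this
    have h1 : HasDerivAt (fun p : ℝ => (a₁ * x₁) ^ p) (Real.log a₁ + Real.log x₁) 0 := by
      have := (Real.hasStrictDerivAt_const_rpow (mul_pos ha₁ hx₁) 0).hasDerivAt
      simpa [Real.log_mul ha₁.ne' hx₁.ne'] using this
    have := h0.add h1
    refine this.congr_of_eventuallyEq (Eventually.of_forall fun p => ?_)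
    simp [Real.mul_rpow ha₀.le hx₀.le, Real.mul_rpow ha₁.le hx₁.le]
  have hD : HasDerivAt (fun p : ℝ => a₀ ^ p + a₁ ^ p) (Real.log a₀ + Real.log a₁) 0 := by
    have h0 := (Real.hasStrictDerivAt_const_rpow ha₀ 0).hasDerivAt
    have h1 := (Real.hasStrictDerivAt_const_rpow ha₁ 0).hasDerivAt
    exact (h0.add h1).congr_deriv (by simp)
  have hD0 : (fun p : ℝ => a₀ ^ p + a₁ ^ p) 0 ≠ 0 := by norm_num
  have hFder : HasDerivAt F ((Real.log x₀ + Real.log x₁) / 2) 0 := by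
    have := hN.div hD hD0
    refine this.congr_deriv ?_
    simp only [Real.rpow_zero]
    ring
  have hlog : HasDerivAt (fun p : ℝ => Real.log (F p)) ((Real.log x₀ + Real.log x₁) / 2) 0 := by
    have := (Real.hasDerivAt_log (hFpos 0).ne').comp 0 hFder
    have hF0 : F 0 = 1 := by simp [hF]
    simpa [hF0, Function.comp_def] using this
  have hslope : Tendsto (fun p : ℝ => Real.log (F p) / p) (nhdsWithin 0 {0}ᶜ)
      (nhds ((Real.log x₀ + Real.log x₁) / 2)) := by
    have := hasDerivAt_iff_tendsto_slope.mp hlog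
    refine this.congr fun p => ?_
    have hF0 : F 0 = 1 := by simp [hF]
    simp [slope_def_field, hF0, div_eq_inv_mul]
  have hexp : Tendsto (fun p : ℝ => Real.exp (Real.log (F p) / p)) (nhdsWithin 0 {0}ᶜ)
      (nhds (Real.exp ((Real.log x₀ + Real.log x₁) / 2))) :=
    (Real.continuous_exp.continuousAt.tendsto).comp hslope
  have heq : ∀ p : ℝ, F p ^ (1 / p) = Real.exp (Real.log (F p) / p) := fun p => by
    rw [Real.rpow_def_of_pos (hFpos p)]
    ring_nf
  have hval : Real.exp ((Real.log x₀ + Real.log x₁) / 2)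
      = x₀ ^ ((1 : ℝ) / 2) * x₁ ^ ((1 : ℝ) / 2) := by
    rw [Real.rpow_def_of_pos hx₀, Real.rpow_def_of_pos hx₁, ← Real.exp_add]
    ring_nf
  rw [← hval]
  exact hexp.congr fun p => (heq p).symm
end

section
/- Let c be a real number with c ≥ −1. Then, as the real parameter p tends to +∞, the quantity ((((c+1)^p + 1)^(1/p)) − 1)/(((2^p + 1)^(1/p)) − 1) tends to max(c, 0), where all powers are real powers (rpow). -/
open Filter

lemma two_rpow_inv : Tendsto (fun p : ℝ => (2:ℝ)^(1/p)) atTop (nhds 1) := by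
  have h0 : Tendsto (fun p : ℝ => 1/p) atTop (nhds 0) := by
    simpa [one_div] using tendsto_inv_atTop_zero
  have hcont : ContinuousAt (fun y : ℝ => (2:ℝ)^y) 0 :=
    Real.continuousAt_const_rpow (by norm_num)
  simpa [Function.comp_def] using hcont.tendsto.comp h0

lemma key (a : ℝ) (ha : 0 ≤ a) :
    Tendsto (fun p : ℝ => (a^p + 1)^(1/p)) atTop (nhds (max a 1)) := by
  rcases le_total a 1 with h1 | h1
  · rw [max_eq_right h1]
    apply tendsto_of_tendsto_of_tendsto_of_le_of_le' tendsto_const_nhds two_rpow_inv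
    · filter_upwards [eventually_ge_atTop (1:ℝ)] with p hp
      apply Real.one_le_rpow
      · nlinarith [Real.rpow_nonneg ha p]
      · positivity
    · filter_upwards [eventually_ge_atTop (1:ℝ)] with p hp
      apply Real.rpow_le_rpow (by positivity)
      · nlinarith [Real.rpow_le_one ha h1 (by linarith : (0:ℝ) ≤ p)]
      · positivity
  · rw [max_eq_left h1]
    have ha0 : 0 < a := lt_of_lt_of_le one_pos h1
    have hmul : Tendsto (fun p : ℝ => (2:ℝ)^(1/p) * a) atTop (nhds a) := by
      simpa using two_rpow_inv.mul_const a
    apply tendsto_of_tendsto_of_tendsto_of_le_of_le' tendsto_const_nhds hmul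
    · filter_upwards [eventually_ge_atTop (1:ℝ)] with p hp
      have hpp : (a^p)^(1/p) = a := by
        rw [← Real.rpow_mul ha0.le, mul_one_div, div_self (by linarith : p ≠ 0),
          Real.rpow_one]
      calc a = (a^p)^(1/p) := hpp.symm
        _ ≤ (a^p + 1)^(1/p) :=
          Real.rpow_le_rpow (by positivity) (by linarith) (by positivity)
    · filter_upwards [eventually_ge_atTop (1:ℝ)] with p hp
      have hpp : (a^p)^(1/p) = a := by
        rw [← Real.rpow_mul ha0.le, mul_one_div, div_self (by linarith : p ≠ 0),
          Real.rpow_one]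
      have h2 : a^p + 1 ≤ 2 * a^p := by
        nlinarith [Real.one_le_rpow h1 (by linarith : (0:ℝ) ≤ p)]
      calc (a^p + 1)^(1/p) ≤ (2 * a^p)^(1/p) :=
            Real.rpow_le_rpow (by positivity) h2 (by positivity)
        _ = 2^(1/p) * a := by
            rw [Real.mul_rpow (by norm_num) (by positivity), hpp]

/-- The smooth approximation of the clamped illumination term: for `c ≥ -1`,
`((((c+1)^p + 1)^(1/p)) - 1)/(((2^p + 1)^(1/p)) - 1)` tends to `max c 0` as `p → ∞`. -/
theorem smooth_clamp_tendsto_max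
    (c : ℝ) (hc : -1 ≤ c) :
    Tendsto
      (fun p : ℝ => ((((c + 1) ^ p + 1) ^ (1 / p)) - 1) /
        ((((2 : ℝ) ^ p + 1) ^ (1 / p)) - 1))
      atTop (nhds (max c 0)) := by
  have hnum := (key (c+1) (by linarith)).sub_const 1
  have hden := (key 2 (by norm_num)).sub_const 1
  have := hnum.div hden (by norm_num)
  have heq : max (c+1) 1 - 1 = max c 0 := by
    rcases le_total c 0 with h | h
    · rw [max_eq_right h, max_eq_right (by linarith : c + 1 ≤ 1)]; ring
    · rw [max_eq_left h, max_eq_left (by linarith : 1 ≤ c + 1)]; ring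
  rw [show (2:ℝ) ⊔ 1 - 1 = 1 by norm_num, heq] at this
  simpa [div_eq_mul_inv, Pi.div_def, Pi.mul_def, Pi.inv_def] using this
end

section
/- Let p be a nonzero real number, A and B positive real numbers, and θ a real number such that both θ and p·θ lie in the interval (−π, π]. Then, using principal-branch complex powers (cpow), (((A : ℂ)·exp(I·θ))^p + ((B : ℂ)·exp(I·θ))^p)^(1/p) = ((A^p + B^p)^(1/p) : ℂ) · exp(I·θ), where A^p + B^p and its (1/p)-th power are real powers (rpow) of positive reals. -/
open Complex

lemma phase_cpow_aux (r q φ : ℝ) (hr : 0 < r)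
    (hφ : φ ∈ Set.Ioc (-Real.pi) Real.pi) :
    ((r : ℂ) * Complex.exp (Complex.I * (φ : ℂ))) ^ (q : ℂ) =
      (((r ^ q : ℝ)) : ℂ) * Complex.exp (Complex.I * ((q * φ : ℝ) : ℂ)) := by
  have h1 : (r : ℂ) * Complex.exp (Complex.I * (φ : ℂ)) =
      Complex.exp (((Real.log r : ℝ) : ℂ) + (φ : ℂ) * Complex.I) := by
    rw [Complex.exp_add]
    congr 1
    · rw [← Complex.ofReal_exp, Real.exp_log hr]
    · ring_nf
  rw [h1, Complex.cpow_def_of_ne_zero (Complex.exp_ne_zero _)]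
  rw [Complex.log_exp]
  · rw [Real.rpow_def_of_pos hr, Complex.ofReal_exp, ← Complex.exp_add]
    congr 1
    push_cast
    ring
  · simpa using hφ.1
  · simpa using hφ.2

/-- Removing the common phase factor: for nonzero real `p`, positive amplitudes `A, B`,
and a phase `θ` with `θ` and `p·θ` both in `(-π, π]`, the Hölder–Minkowski operation
factors the phase out: `((A e^{iθ})^p + (B e^{iθ})^p)^(1/p) = (A^p + B^p)^(1/p) e^{iθ}`
(principal-branch complex powers, real powers on the amplitudes). -/
theorem holder_minkowski_phase_factor
    (p A B θ : ℝ) (hp : p ≠ 0) (hA : 0 < A) (hB : 0 < B)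
    (hθ : θ ∈ Set.Ioc (-Real.pi) Real.pi)
    (hpθ : p * θ ∈ Set.Ioc (-Real.pi) Real.pi) :
    (((A : ℂ) * Complex.exp (Complex.I * (θ : ℂ))) ^ (p : ℂ) +
        ((B : ℂ) * Complex.exp (Complex.I * (θ : ℂ))) ^ (p : ℂ)) ^ ((1 / p : ℝ) : ℂ) =
      (((A ^ p + B ^ p) ^ (1 / p) : ℝ) : ℂ) * Complex.exp (Complex.I * (θ : ℂ)) := by
  rw [phase_cpow_aux A p θ hA hθ, phase_cpow_aux B p θ hB hθ, ← add_mul, ← Complex.ofReal_add,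
    phase_cpow_aux (A ^ p + B ^ p) (1 / p) (p * θ) (by positivity) hpθ]
  congr 2
  have hpc : (p:ℂ) ≠ 0 := by exact_mod_cast hp
  push_cast
  field_simp
end
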